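/- Suppose the feasible set G of the asymptotic-stability semi-infinite program has nonempty interior. Suppose (y₁*, …, y_{M+L}*) ∈ N^{M+L} attains the supremum over N^{M+L} of the relaxed value map Φ, and (λ*, c*) ∈ G(y₁*, …, y_{M+L}*) minimizes ψ over G(y₁*, …, y_{M+L}*). Then V(z) = Σ_{i=1}^M λ*_i φ_i(z) and W(z) = Σ_{j=1}^L c*_j w_j(z) satisfy V(0) = 0 = W(0), V(y) > 0 and W(y) > 0 for every y ∈ N \ {0}, and ⟨∇V(y), f(y)⟩ + W(y) ≤ 0 for every y ∈ N; consequently the origin is asymptotically stable for the system ẋ = f(x), with stability margin W. -/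

import Mathlib

/-- A function `α : [0,∞) → [0,∞)` is of class K if it is continuous,
strictly increasing, and `α 0 = 0`. -/
def IsClassK (α : ℝ → ℝ) : Prop :=
  ContinuousOn α (Set.Ici 0) ∧ StrictMonoOn α (Set.Ici 0) ∧ α 0 = 0 ∧
    ∀ x ∈ Set.Ici (0 : ℝ), 0 ≤ α x

/-- The origin is Lyapunov stable for `ẋ = f(x)`. -/
def LyapunovStable (n : ℕ) (f : EuclideanSpace ℝ (Fin n) → EuclideanSpace ℝ (Fin n)) : Prop :=
  ∀ ε > (0 : ℝ), ∃ δ > (0 : ℝ), ∀ x : ℝ → EuclideanSpace ℝ (Fin n),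
    (∀ t, 0 ≤ t → HasDerivAt x (f (x t)) t) → ‖x 0‖ < δ →
      ∀ t, 0 ≤ t → ‖x t‖ < ε

/-- The origin is asymptotically stable for `ẋ = f(x)`: it is Lyapunov stable and
asymptotically attractive. -/
def AsymptoticallyStable (n : ℕ)
    (f : EuclideanSpace ℝ (Fin n) → EuclideanSpace ℝ (Fin n)) : Prop :=
  LyapunovStable n f ∧
    ∀ ε > (0 : ℝ), ∃ r > (0 : ℝ), ∃ T > (0 : ℝ), ∀ x : ℝ → EuclideanSpace ℝ (Fin n),
      (∀ t, 0 ≤ t → HasDerivAt x (f (x t)) t) → ‖x 0‖ < r →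
        ∀ t, T < t → ‖x t‖ < ε


open Module

lemma sumfst {M L : ℕ} (a : Fin M → ℝ) (s t : ℝ)
    (p q : EuclideanSpace ℝ (Fin M) × EuclideanSpace ℝ (Fin L)) :
    ∑ i, (s • p + t • q).1 i * a i = s * (∑ i, p.1 i * a i) + t * (∑ i, q.1 i * a i) := by
  simp [Prod.fst_add, Prod.smul_fst, PiLp.add_apply, PiLp.smul_apply, smul_eq_mul,
    add_mul, mul_assoc, Finset.sum_add_distrib, Finset.mul_sum]

lemma sumsnd {M L : ℕ} (a : Fin L → ℝ) (s t : ℝ)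
    (p q : EuclideanSpace ℝ (Fin M) × EuclideanSpace ℝ (Fin L)) :
    ∑ j, (s • p + t • q).2 j * a j = s * (∑ j, p.2 j * a j) + t * (∑ j, q.2 j * a j) := by
  simp [Prod.snd_add, Prod.smul_snd, PiLp.add_apply, PiLp.smul_apply, smul_eq_mul,
    add_mul, mul_assoc, Finset.sum_add_distrib, Finset.mul_sum]

lemma convex_constraint {M L : ℕ} (a d : Fin M → ℝ) (b : Fin L → ℝ) (c1 c2 c3 : ℝ) :
    Convex ℝ {p : EuclideanSpace ℝ (Fin M) × EuclideanSpace ℝ (Fin L) |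
      c1 ≤ ∑ i, p.1 i * a i ∧ (∑ i, p.1 i * a i) ≤ c2 ∧ c3 ≤ ∑ j, p.2 j * b j ∧
      (∑ i, p.1 i * d i) + (∑ j, p.2 j * b j) ≤ 0} := by
  intro p hp q hq s t hs ht hst
  obtain ⟨h1, h2, h3, h4⟩ := hp
  obtain ⟨g1, g2, g3, g4⟩ := hq
  refine ⟨?_, ?_, ?_, ?_⟩ <;> simp only [sumfst, sumsnd]
  · have hc : s * c1 + t * c1 = c1 := by rw [← add_mul, hst, one_mul]
    linarith [mul_le_mul_of_nonneg_left h1 hs, mul_le_mul_of_nonneg_left g1 ht]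
  · have hc : s * c2 + t * c2 = c2 := by rw [← add_mul, hst, one_mul]
    linarith [mul_le_mul_of_nonneg_left h2 hs, mul_le_mul_of_nonneg_left g2 ht]
  · have hc : s * c3 + t * c3 = c3 := by rw [← add_mul, hst, one_mul]
    linarith [mul_le_mul_of_nonneg_left h3 hs, mul_le_mul_of_nonneg_left g3 ht]
  · linarith [mul_le_mul_of_nonneg_left h4 hs, mul_le_mul_of_nonneg_left g4 ht]

lemma closed_constraint {M L : ℕ} (a d : Fin M → ℝ) (b : Fin L → ℝ) (c1 c2 c3 : ℝ) :
    IsClosed {p : EuclideanSpace ℝ (Fin M) × EuclideanSpace ℝ (Fin L) |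
      c1 ≤ ∑ i, p.1 i * a i ∧ (∑ i, p.1 i * a i) ≤ c2 ∧ c3 ≤ ∑ j, p.2 j * b j ∧
      (∑ i, p.1 i * d i) + (∑ j, p.2 j * b j) ≤ 0} := by
  have cA : Continuous (fun p : EuclideanSpace ℝ (Fin M) × EuclideanSpace ℝ (Fin L) =>
      ∑ i, p.1 i * a i) := by fun_prop
  have cD : Continuous (fun p : EuclideanSpace ℝ (Fin M) × EuclideanSpace ℝ (Fin L) =>
      ∑ i, p.1 i * d i) := by fun_prop
  have cB : Continuous (fun p : EuclideanSpace ℝ (Fin M) × EuclideanSpace ℝ (Fin L) =>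
      ∑ j, p.2 j * b j) := by fun_prop
  exact ((isClosed_le continuous_const cA).inter ((isClosed_le cA continuous_const).inter
    ((isClosed_le continuous_const cB).inter (isClosed_le (cD.add cB) continuous_const))))

lemma lyapunov_core {n : ℕ} {f : EuclideanSpace ℝ (Fin n) → EuclideanSpace ℝ (Fin n)}
    {N : Set (EuclideanSpace ℝ (Fin n))} (hNnbd : N ∈ nhds 0)
    {α β : ℝ → ℝ} (hα : IsClassK α) (hβ : IsClassK β)
    {V : EuclideanSpace ℝ (Fin n) → ℝ}
    {V' : EuclideanSpace ℝ (Fin n) → (EuclideanSpace ℝ (Fin n) →L[ℝ] ℝ)}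
    (hVd : ∀ z, HasFDerivAt V (V' z) z)
    (hlow : ∀ y ∈ N, α ‖y‖ ≤ V y) (hup : ∀ y ∈ N, V y ≤ β ‖y‖)
    (hdec : ∀ y ∈ N, V' y (f y) ≤ 0) :
    ∀ ε > (0:ℝ), ∃ δ > (0:ℝ), ∀ x : ℝ → EuclideanSpace ℝ (Fin n),
      (∀ t, 0 ≤ t → HasDerivAt x (f (x t)) t) → ‖x 0‖ < δ →
        ∀ t, 0 ≤ t → ‖x t‖ < ε := by
  intro ε hε
  obtain ⟨R0, hR0, hball⟩ := Metric.mem_nhds_iff.mp hNnbd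
  set ε₀ := min ε (R0/2) with hε₀def
  have hε₀ : 0 < ε₀ := lt_min hε (by linarith)
  have hε₀ε : ε₀ ≤ ε := min_le_left _ _
  have hsub : Metric.closedBall (0 : EuclideanSpace ℝ (Fin n)) ε₀ ⊆ N :=
    subset_trans (Metric.closedBall_subset_ball (by
      calc ε₀ ≤ R0/2 := min_le_right _ _
      _ < R0 := by linarith)) hball
  have hα0 : 0 < α ε₀ := by
    have := hα.2.1 Set.self_mem_Ici (Set.mem_Ici.mpr hε₀.le) hε₀
    rwa [hα.2.2.1] at this
  have hcont : ContinuousWithinAt β (Set.Ici 0) 0 := hβ.1 0 Set.self_mem_Ici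
  have hev : {s : ℝ | β s < α ε₀} ∈ nhdsWithin (0:ℝ) (Set.Ici 0) := by
    have h := hcont
    rw [ContinuousWithinAt, hβ.2.2.1] at h
    exact h.eventually_lt_const hα0
  rw [Metric.mem_nhdsWithin_iff] at hev
  obtain ⟨δ', hδ', hδsub⟩ := hev
  refine ⟨min δ' ε₀, lt_min hδ' hε₀, ?_⟩
  intro x hx hx0
  have hx0' : ‖x 0‖ < ε₀ := lt_of_lt_of_le hx0 (min_le_right _ _)
  have hxc : ∀ t : ℝ, 0 ≤ t → ContinuousAt x t := fun t ht => (hx t ht).continuousAt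
  have hg : ∀ t : ℝ, 0 ≤ t → HasDerivAt (fun s => V (x s)) (V' (x t) (f (x t))) t :=
    fun t ht => (hVd (x t)).comp_hasDerivAt t (hx t ht)
  have hmono : ∀ T : ℝ, 0 ≤ T → (∀ s, 0 ≤ s → s ≤ T → ‖x s‖ ≤ ε₀) → V (x T) ≤ V (x 0) := by
    intro T hT hstay
    have hN : ∀ s, s ∈ Set.Icc (0:ℝ) T → x s ∈ N := fun s hs =>
      hsub (Metric.mem_closedBall.mpr (by
        simpa using hstay s hs.1 hs.2))
    have hcont' : ContinuousOn (fun s => V (x s)) (Set.Icc 0 T) := fun s hs =>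
      ((hg s hs.1).continuousAt).continuousWithinAt
    have hanti := antitoneOn_of_deriv_nonpos (convex_Icc 0 T) hcont' (fun s hs => by
        rw [interior_Icc] at hs
        exact ((hg s hs.1.le).differentiableAt).differentiableWithinAt)
      (fun s hs => by
        rw [interior_Icc] at hs
        rw [(hg s hs.1.le).deriv]
        exact hdec _ (hN s ⟨hs.1.le, hs.2.le⟩))
    exact hanti (Set.left_mem_Icc.mpr hT) (Set.right_mem_Icc.mpr hT) hT
  intro t ht
  by_contra hcon
  push_neg at hcon
  have hA : {t : ℝ | 0 ≤ t ∧ ε₀ ≤ ‖x t‖}.Nonempty := ⟨t, ht, le_trans hε₀ε hcon⟩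
  set A := {t : ℝ | 0 ≤ t ∧ ε₀ ≤ ‖x t‖} with hAdef
  have hAbdd : BddBelow A := ⟨0, fun s hs => hs.1⟩
  set t₁ := sInf A with ht₁def
  have ht₁0 : 0 ≤ t₁ := le_csInf hA (fun s hs => hs.1)
  have ht₁cl : t₁ ∈ closure A := csInf_mem_closure hA hAbdd
  have hxt₁ : ContinuousAt (fun s => ‖x s‖) t₁ := (hxc t₁ ht₁0).norm
  haveI hne : (nhdsWithin t₁ A).NeBot := mem_closure_iff_nhdsWithin_neBot.mp ht₁cl
  have hev1 : ∀ᶠ s in nhdsWithin t₁ A, ε₀ ≤ ‖x s‖ :=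
    eventually_nhdsWithin_of_forall (fun s hs => hs.2)
  have h1 : ε₀ ≤ ‖x t₁‖ := ge_of_tendsto hxt₁.continuousWithinAt hev1
  have ht₁pos : 0 < t₁ := by
    rcases ht₁0.lt_or_eq with h | h
    · exact h
    · exfalso; rw [← h] at h1; linarith
  have hlt : ∀ s, 0 ≤ s → s < t₁ → ‖x s‖ < ε₀ := by
    intro s hs hst
    by_contra hh; push_neg at hh
    exact absurd (csInf_le hAbdd ⟨hs, hh⟩) (not_le.mpr hst)
  have h2 : ‖x t₁‖ ≤ ε₀ := by
    have hcl : t₁ ∈ closure (Set.Ico 0 t₁) := by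
      rw [closure_Ico (ne_of_lt ht₁pos)]
      exact Set.right_mem_Icc.mpr ht₁0
    haveI := mem_closure_iff_nhdsWithin_neBot.mp hcl
    have hev2 : ∀ᶠ s in nhdsWithin t₁ (Set.Ico 0 t₁), ‖x s‖ ≤ ε₀ :=
      eventually_nhdsWithin_of_forall (fun s hs => (hlt s hs.1 hs.2).le)
    exact le_of_tendsto hxt₁.continuousWithinAt hev2
  have hstay : ∀ s, 0 ≤ s → s ≤ t₁ → ‖x s‖ ≤ ε₀ := by
    intro s hs hst
    rcases hst.lt_or_eq with h | h
    · exact (hlt s hs h).le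
    · rw [h]; exact h2
  have hVle := hmono t₁ ht₁0 hstay
  have hx0N : x 0 ∈ N := hsub (Metric.mem_closedBall.mpr (by simpa using hx0'.le))
  have hxt₁N : x t₁ ∈ N := hsub (Metric.mem_closedBall.mpr (by simpa using h2))
  have hb : β ‖x 0‖ < α ε₀ := by
    apply hδsub
    constructor
    · rw [Metric.mem_ball, Real.dist_eq, sub_zero, abs_of_nonneg (norm_nonneg _)]
      exact lt_of_lt_of_le hx0 (min_le_left _ _)
    · exact norm_nonneg _
  have heqn : ‖x t₁‖ = ε₀ := le_antisymm h2 h1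
  have hαle : α ε₀ ≤ V (x t₁) := by
    rw [← heqn]; exact hlow _ hxt₁N
  linarith [hup _ hx0N]

lemma exchange {E : Type*} [NormedAddCommGroup E] [NormedSpace ℝ E] [FiniteDimensional ℝ E]
    {ι : Type*} [Nonempty ι] (Cs : ι → Set E)
    (hconv : ∀ i, Convex ℝ (Cs i)) (hclosed : ∀ i, IsClosed (Cs i))
    (ψ : E → ℝ) (hψcont : Continuous ψ) (hψnonneg : ∀ p, 0 ≤ ψ p)
    (hψstrict : StrictConvexOn ℝ Set.univ ψ)
    (hψcoercive : ∀ C : ℝ, ∃ R : ℝ, ∀ p, R ≤ ‖p‖ → C ≤ ψ p)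
    {G : Set E} (hG : G = ⋂ i, Cs i) (hGne : G.Nonempty)
    {d : ℕ} (hd : finrank ℝ E ≤ d)
    {pstar : E} {ystar : Fin d → ι}
    (hmax : ∀ ys : Fin d → ι, sInf (ψ '' ⋂ k, Cs (ys k)) ≤ ψ pstar)
    (hfeas : pstar ∈ ⋂ k, Cs (ystar k))
    (hmin : ∀ p ∈ ⋂ k, Cs (ystar k), ψ pstar ≤ ψ p) :
    pstar ∈ G := by
  classical
  obtain ⟨g0, hg0⟩ := hGne
  have hg0C : ∀ i, g0 ∈ Cs i := fun i => Set.mem_iInter.mp (hG ▸ hg0) i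
  set v := sInf (ψ '' G) with hv
  have hbdd : BddBelow (ψ '' G) := ⟨0, by rintro r ⟨p, -, rfl⟩; exact hψnonneg p⟩
  have hGsub : G ⊆ ⋂ k, Cs (ystar k) := by
    rw [hG]; exact fun p hp => Set.mem_iInter.mpr fun k => Set.mem_iInter.mp hp (ystar k)
  have hple : ψ pstar ≤ v := le_csInf ⟨ψ g0, ⟨g0, hg0, rfl⟩⟩
    (by rintro r ⟨p, hpG, rfl⟩; exact hmin p (hGsub hpG))
  -- sublevel sets are compact
  have hcpt : ∀ c : ℝ, IsCompact {p : E | ψ p ≤ c} := by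
    intro c
    obtain ⟨R, hR⟩ := hψcoercive (c + 1)
    apply Metric.isCompact_of_isClosed_isBounded (isClosed_le hψcont continuous_const)
    have hsubB : {p : E | ψ p ≤ c} ⊆ Metric.closedBall (0:E) (max R 0) := by
      intro p hp
      rw [Metric.mem_closedBall, dist_zero_right]
      by_contra hcc
      push_neg at hcc
      have h1 : R ≤ ‖p‖ := le_trans (le_max_left _ _) hcc.le
      have h2 := hR p h1
      have hpc : ψ p ≤ c := hp
      linarith
    exact Metric.isBounded_closedBall.subset hsubB
  have hvle : v ≤ ψ pstar := by
    by_contra hlt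
    push_neg at hlt
    set c := (ψ pstar + v) / 2 with hc
    have hc1 : ψ pstar < c := by simp only [hc]; linarith
    have hc2 : c < v := by simp only [hc]; linarith
    set S := {p : E | ψ p ≤ c} with hS
    have hSconv : Convex ℝ S := by
      have := hψstrict.convexOn.convex_le c
      simpa [Set.sep_univ] using this
    have hdisj : S ∩ ⋂ i, Cs i = ∅ := by
      rw [Set.eq_empty_iff_forall_notMem]
      rintro p ⟨hp1, hp2⟩
      have hpG : p ∈ G := hG ▸ hp2
      have : v ≤ ψ p := csInf_le hbdd ⟨p, hpG, rfl⟩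
      have hpc : ψ p ≤ c := hp1
      linarith
    obtain ⟨t, ht⟩ := (hcpt c).elim_finite_subfamily_closed Cs hclosed hdisj
    set F : Option ι → Set E := fun o => Option.elim o S (fun i => Cs i) with hF
    set s : Finset (Option ι) := insert none (t.image some) with hsdef
    have hFconv : ∀ o ∈ s, Convex ℝ (F o) := by
      intro o _
      cases o with
      | none => exact hSconv
      | some i => exact hconv i
    have hstot : ¬ (⋂ o ∈ s, F o).Nonempty := by
      rintro ⟨p, hp⟩
      have hpS : p ∈ S := by
        have := Set.mem_iInter₂.mp hp none (Finset.mem_insert_self _ _)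
        exact this
      have hpC : p ∈ ⋂ i ∈ t, Cs i := by
        apply Set.mem_biInter
        intro i hi
        have : some i ∈ s := Finset.mem_insert_of_mem (Finset.mem_image_of_mem some hi)
        exact Set.mem_iInter₂.mp hp (some i) this
      have : p ∈ S ∩ ⋂ i ∈ t, Cs i := ⟨hpS, hpC⟩
      rw [ht] at this
      exact this
    have hcontra := mt (Convex.helly_theorem' hFconv) hstot
    push_neg at hcontra
    obtain ⟨I, hIs, hIcard, hIempty⟩ := hcontra
    have hnoneI : none ∈ I := by
      by_contra hn
      have hg0I : g0 ∈ ⋂ o ∈ I, F o := by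
        apply Set.mem_biInter
        intro o ho
        cases o with
        | none => exact absurd ho hn
        | some i => exact hg0C i
      rw [hIempty] at hg0I
      exact hg0I
    set J := I.erase none with hJ
    have hJcard : J.card ≤ d := by
      have h1 : J.card = I.card - 1 := by rw [hJ]; exact Finset.card_erase_of_mem hnoneI
      omega
    set l := J.toList with hl
    have hlen : l.length ≤ d := by rw [hl, Finset.length_toList]; exact hJcard
    obtain ⟨i0⟩ := (inferInstance : Nonempty ι)
    set ys : Fin d → ι := fun k =>
      if h : (k : ℕ) < l.length then Option.elim (l.get ⟨k, h⟩) i0 (fun i => i) else i0 with hys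
    have hkey : (⋂ k, Cs (ys k)) ∩ S = ∅ := by
      rw [Set.eq_empty_iff_forall_notMem]
      rintro p ⟨hp1, hp2⟩
      have hpI : p ∈ ⋂ o ∈ I, F o := by
        apply Set.mem_biInter
        intro o ho
        cases o with
        | none => exact hp2
        | some i =>
          have hiJ : some i ∈ J := Finset.mem_erase.mpr ⟨Option.some_ne_none i, ho⟩
          have hil : some i ∈ l := (Finset.mem_toList).mpr hiJ
          obtain ⟨m, hm⟩ := List.mem_iff_get.mp hil
          have hmd : (m : ℕ) < d := lt_of_lt_of_le m.isLt hlen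
          have hyk : ys ⟨m, hmd⟩ = i := by
            rw [hys]
            simp only
            rw [dif_pos (show ((⟨(m:ℕ), hmd⟩ : Fin d) : ℕ) < l.length from m.isLt)]
            have : l.get ⟨(m:ℕ), m.isLt⟩ = some i := by
              convert hm using 2
            rw [this]
            rfl
          have := Set.mem_iInter.mp hp1 ⟨m, hmd⟩
          rw [hyk] at this
          exact this
      rw [hIempty] at hpI
      exact hpI
    have hg0ys : g0 ∈ ⋂ k, Cs (ys k) := Set.mem_iInter.mpr fun k => hg0C _
    have h2 : c ≤ sInf (ψ '' ⋂ k, Cs (ys k)) := by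
      refine le_csInf ⟨ψ g0, ⟨g0, hg0ys, rfl⟩⟩ ?_
      rintro r ⟨p, hp, rfl⟩
      by_contra hh
      push_neg at hh
      have : p ∈ (⋂ k, Cs (ys k)) ∩ S := ⟨hp, hh.le⟩
      rw [hkey] at this
      exact this
    linarith [hmax ys]
  have hveq : ψ pstar = v := le_antisymm hple hvle
  -- moved up
  have himgne : (ψ '' G).Nonempty := ⟨ψ g0, g0, hg0, rfl⟩
  by_contra hpG
  -- existence of a minimizer of ψ over G
  have hGclosed : IsClosed G := hG ▸ isClosed_iInter hclosed
  obtain ⟨p0, hp0G, hp0⟩ : ∃ p ∈ G, ψ p < v + 1 := by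
    obtain ⟨r, ⟨p, hpG, rfl⟩, hr⟩ := exists_lt_of_csInf_lt himgne
      (show sInf (ψ '' G) < v + 1 by rw [← hv]; linarith)
    exact ⟨p, hpG, hr⟩
  set S1 := {p : E | ψ p ≤ v + 1} ∩ G with hS1
  have hS1cpt : IsCompact S1 := ((hcpt (v+1)).inter_right hGclosed)
  have hS1ne : S1.Nonempty := ⟨p0, hp0.le, hp0G⟩
  obtain ⟨phat, hphatS1, hphatmin⟩ := hS1cpt.exists_isMinOn hS1ne hψcont.continuousOn
  have hphatG : phat ∈ G := hphatS1.2
  have hphatle : ∀ g ∈ G, ψ phat ≤ ψ g := by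
    intro g hgG
    by_cases hg : ψ g ≤ v + 1
    · exact hphatmin ⟨hg, hgG⟩
    · push_neg at hg
      calc ψ phat ≤ ψ p0 := hphatmin ⟨hp0.le, hp0G⟩
      _ ≤ v + 1 := hp0.le
      _ ≤ ψ g := hg.le
  have hphatv : ψ phat = v := by
    refine le_antisymm ?_ (csInf_le hbdd ⟨phat, hphatG, rfl⟩)
    refine le_csInf himgne ?_
    rintro r ⟨p, hpG', rfl⟩
    exact hphatle p hpG'
  have hneq : phat ≠ pstar := fun h => hpG (h ▸ hphatG)
  have hmid := hψstrict.2 (Set.mem_univ phat) (Set.mem_univ pstar) hneq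
    (by norm_num : (0:ℝ) < 1/2) (by norm_num : (0:ℝ) < 1/2) (by norm_num)
  have hmidmem : (1/2 : ℝ) • phat + (1/2 : ℝ) • pstar ∈ ⋂ k, Cs (ystar k) := by
    have hconv' : Convex ℝ (⋂ k, Cs (ystar k)) := convex_iInter fun k => hconv _
    exact hconv' (hGsub hphatG) hfeas (by norm_num) (by norm_num) (by norm_num)
  have := hmin _ hmidmem
  rw [hphatv, hveq] at hmid
  simp only [smul_eq_mul] at hmid
  linarith

theorem stmt_2
    (n M L : ℕ) (hn : 1 ≤ n) (hM : 1 ≤ M) (hL : 1 ≤ L)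
    (f : EuclideanSpace ℝ (Fin n) → EuclideanSpace ℝ (Fin n))
    (hfLip : ∃ K : NNReal, LipschitzWith K f) (hf0 : f 0 = 0)
    (N : Set (EuclideanSpace ℝ (Fin n))) (hNcpt : IsCompact N)
    (hNnbd : N ∈ nhds (0 : EuclideanSpace ℝ (Fin n)))
    (α β γ : ℝ → ℝ) (hα : IsClassK α) (hβ : IsClassK β) (hγ : IsClassK γ)
    (φ : Fin M → EuclideanSpace ℝ (Fin n) → ℝ)
    (hφ : ∀ i, ContDiff ℝ 1 (φ i)) (hφ0 : ∀ i, φ i 0 = 0)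
    (w : Fin L → EuclideanSpace ℝ (Fin n) → ℝ)
    (hw : ∀ j, ContDiff ℝ 1 (w j)) (hw0 : ∀ j, w j 0 = 0)
    (ψ : EuclideanSpace ℝ (Fin M) × EuclideanSpace ℝ (Fin L) → ℝ)
    (hψcont : Continuous ψ) (hψnonneg : ∀ p, 0 ≤ ψ p)
    (hψstrict : StrictConvexOn ℝ Set.univ ψ)
    (hψcoercive : ∀ C : ℝ, ∃ R : ℝ, ∀ p : EuclideanSpace ℝ (Fin M) × EuclideanSpace ℝ (Fin L),
      R ≤ ‖p‖ → C ≤ ψ p)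
    -- the feasible set of the asymptotic-stability semi-infinite program
    (G : Set (EuclideanSpace ℝ (Fin M) × EuclideanSpace ℝ (Fin L)))
    (hG : G = {p | ∀ y ∈ N,
      α ‖y‖ ≤ ∑ i, p.1 i * φ i y ∧ (∑ i, p.1 i * φ i y) ≤ β ‖y‖ ∧
      γ ‖y‖ ≤ ∑ j, p.2 j * w j y ∧
      (∑ i, p.1 i * fderiv ℝ (φ i) y (f y)) + (∑ j, p.2 j * w j y) ≤ 0})
    (hGint : (interior G).Nonempty)
    -- the relaxed feasible sets
    (Gpt : (Fin (M + L) → EuclideanSpace ℝ (Fin n)) →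
      Set (EuclideanSpace ℝ (Fin M) × EuclideanSpace ℝ (Fin L)))
    (hGpt : ∀ ys, Gpt ys = {p | ∀ k : Fin (M + L),
      α ‖ys k‖ ≤ ∑ i, p.1 i * φ i (ys k) ∧ (∑ i, p.1 i * φ i (ys k)) ≤ β ‖ys k‖ ∧
      γ ‖ys k‖ ≤ ∑ j, p.2 j * w j (ys k) ∧
      (∑ i, p.1 i * fderiv ℝ (φ i) (ys k) (f (ys k))) + (∑ j, p.2 j * w j (ys k)) ≤ 0})
    -- the relaxed value map Φ
    (Φ : (Fin (M + L) → EuclideanSpace ℝ (Fin n)) → ℝ)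
    (hΦ : ∀ ys, Φ ys = sInf (ψ '' Gpt ys))
    -- (y₁*, …, y_{M+L}*) attains the supremum of Φ over N^{M+L}
    (ystar : Fin (M + L) → EuclideanSpace ℝ (Fin n)) (hystarN : ∀ k, ystar k ∈ N)
    (hystarmax : ∀ ys : Fin (M + L) → EuclideanSpace ℝ (Fin n),
      (∀ k, ys k ∈ N) → Φ ys ≤ Φ ystar)
    -- (λ*, c*) minimizes ψ over G(y₁*, …, y_{M+L}*)
    (lstar : EuclideanSpace ℝ (Fin M)) (cstar : EuclideanSpace ℝ (Fin L))
    (hpstarFeas : (lstar, cstar) ∈ Gpt ystar)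
    (hpstarMin : ∀ p ∈ Gpt ystar, ψ (lstar, cstar) ≤ ψ p)
    -- the functions V and W
    (V : EuclideanSpace ℝ (Fin n) → ℝ) (hV : ∀ z, V z = ∑ i, lstar i * φ i z)
    (W : EuclideanSpace ℝ (Fin n) → ℝ) (hW : ∀ z, W z = ∑ j, cstar j * w j z) :
    V 0 = 0 ∧ W 0 = 0 ∧
    (∀ y ∈ N, y ≠ 0 → 0 < V y) ∧
    (∀ y ∈ N, y ≠ 0 → 0 < W y) ∧
    (∀ y ∈ N, fderiv ℝ V y (f y) + W y ≤ 0) ∧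
    AsymptoticallyStable n f := by
  classical
  have h0N : (0 : EuclideanSpace ℝ (Fin n)) ∈ N := mem_of_mem_nhds hNnbd
  haveI : Nonempty ↥N := ⟨⟨0, h0N⟩⟩
  set Cs : ↥N → Set (EuclideanSpace ℝ (Fin M) × EuclideanSpace ℝ (Fin L)) := fun y =>
    {p | α ‖y.1‖ ≤ ∑ i, p.1 i * φ i y.1 ∧ (∑ i, p.1 i * φ i y.1) ≤ β ‖y.1‖ ∧
      γ ‖y.1‖ ≤ ∑ j, p.2 j * w j y.1 ∧
      (∑ i, p.1 i * fderiv ℝ (φ i) y.1 (f y.1)) + (∑ j, p.2 j * w j y.1) ≤ 0} with hCs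
  have hGeq : G = ⋂ i : ↥N, Cs i := by
    rw [hG]
    ext p
    constructor
    · intro h
      exact Set.mem_iInter.mpr fun i => h i.1 i.2
    · intro h y hy
      exact Set.mem_iInter.mp h ⟨y, hy⟩
  have hGpteq : ∀ ys : Fin (M + L) → ↥N, Gpt (fun k => (ys k).1) = ⋂ k, Cs (ys k) := by
    intro ys
    rw [hGpt]
    ext p
    constructor
    · intro h
      exact Set.mem_iInter.mpr fun k => h k
    · intro h k
      exact Set.mem_iInter.mp h k
  have hconv : ∀ i, Convex ℝ (Cs i) := fun i => convex_constraint _ _ _ _ _ _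
  have hclosed : ∀ i, IsClosed (Cs i) := fun i => closed_constraint _ _ _ _ _ _
  have hGne : G.Nonempty := by
    obtain ⟨p, hp⟩ := hGint
    exact ⟨p, interior_subset hp⟩
  have hfinrank : finrank ℝ (EuclideanSpace ℝ (Fin M) × EuclideanSpace ℝ (Fin L)) ≤ M + L := by
    simp [Module.finrank_prod]
  have hmax' : ∀ ys : Fin (M + L) → ↥N,
      sInf (ψ '' ⋂ k, Cs (ys k)) ≤ ψ (lstar, cstar) := by
    intro ys
    rw [← hGpteq ys]
    have h1 : Φ (fun k => (ys k).1) ≤ Φ ystar := hystarmax _ (fun k => (ys k).2)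
    rw [hΦ, hΦ] at h1
    refine le_trans h1 (csInf_le ⟨0, ?_⟩ ⟨(lstar, cstar), hpstarFeas, rfl⟩)
    rintro r ⟨p, -, rfl⟩
    exact hψnonneg p
  have hystareq : Gpt ystar = ⋂ k, Cs ((fun k => (⟨ystar k, hystarN k⟩ : ↥N)) k) := by
    have h := hGpteq (fun k => ⟨ystar k, hystarN k⟩)
    have h2 : (fun k => ((fun k => (⟨ystar k, hystarN k⟩ : ↥N)) k).1) = ystar := by
      funext k; rfl
    rw [h2] at h
    exact h
  have hpG : (lstar, cstar) ∈ G := by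
    refine exchange Cs hconv hclosed ψ hψcont hψnonneg hψstrict hψcoercive hGeq hGne hfinrank
      (ystar := fun k => ⟨ystar k, hystarN k⟩) hmax' ?_ ?_
    · rw [← hystareq]; exact hpstarFeas
    · rw [← hystareq]; exact hpstarMin
  rw [hG] at hpG
  have hcons : ∀ y ∈ N, α ‖y‖ ≤ V y ∧ V y ≤ β ‖y‖ ∧ γ ‖y‖ ≤ W y ∧
      (∑ i, lstar i * fderiv ℝ (φ i) y (f y)) + W y ≤ 0 := by
    intro y hy
    obtain ⟨h1, h2, h3, h4⟩ := hpG y hy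
    rw [hV y, hW y]
    exact ⟨h1, h2, h3, h4⟩
  -- differentiability of V
  have hVdiff : ∀ z, HasFDerivAt V (∑ i, lstar i • fderiv ℝ (φ i) z) z := by
    intro z
    have hVfun : V = fun z => ∑ i, lstar i * φ i z := funext hV
    rw [hVfun]
    exact HasFDerivAt.fun_sum fun i _ =>
      (((hφ i).differentiable one_ne_zero z).hasFDerivAt).const_mul (lstar i)
  have happ : ∀ z, fderiv ℝ V z (f z) = ∑ i, lstar i * fderiv ℝ (φ i) z (f z) := by
    intro z
    rw [(hVdiff z).fderiv]
    simp [ContinuousLinearMap.sum_apply, ContinuousLinearMap.coe_smul', Pi.smul_apply,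
      smul_eq_mul]
  have hαpos : ∀ y : EuclideanSpace ℝ (Fin n), y ≠ 0 → 0 < α ‖y‖ := by
    intro y hy
    have h := hα.2.1 Set.self_mem_Ici (Set.mem_Ici.mpr (norm_nonneg y)) (norm_pos_iff.mpr hy)
    rwa [hα.2.2.1] at h
  have hγpos : ∀ y : EuclideanSpace ℝ (Fin n), y ≠ 0 → 0 < γ ‖y‖ := by
    intro y hy
    have h := hγ.2.1 Set.self_mem_Ici (Set.mem_Ici.mpr (norm_nonneg y)) (norm_pos_iff.mpr hy)
    rwa [hγ.2.2.1] at h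
  have hdec : ∀ y ∈ N, fderiv ℝ V y (f y) + W y ≤ 0 := by
    intro y hy
    rw [happ]
    exact (hcons y hy).2.2.2
  have hW0 : ∀ y ∈ N, 0 ≤ W y := by
    intro y hy
    refine le_trans (hγ.2.2.2 ‖y‖ (Set.mem_Ici.mpr (norm_nonneg y))) (hcons y hy).2.2.1
  -- Lyapunov stability
  have hkey : ∀ ε > (0:ℝ), ∃ δ > (0:ℝ), ∀ x : ℝ → EuclideanSpace ℝ (Fin n),
      (∀ t, 0 ≤ t → HasDerivAt x (f (x t)) t) → ‖x 0‖ < δ →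
        ∀ t, 0 ≤ t → ‖x t‖ < ε := by
    refine lyapunov_core hNnbd hα hβ hVdiff (fun y hy => (hcons y hy).1)
      (fun y hy => (hcons y hy).2.1) ?_
    intro y hy
    have h4 := (hcons y hy).2.2.2
    have h0 := hW0 y hy
    have : (∑ i, lstar i • fderiv ℝ (φ i) y) (f y)
        = ∑ i, lstar i * fderiv ℝ (φ i) y (f y) := by
      simp [ContinuousLinearMap.sum_apply, ContinuousLinearMap.coe_smul', Pi.smul_apply,
        smul_eq_mul]
    rw [this]
    linarith
  refine ⟨?_, ?_, ?_, ?_, hdec, ?_, ?_⟩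
  · rw [hV]; simp [hφ0]
  · rw [hW]; simp [hw0]
  · intro y hy hy0
    exact lt_of_lt_of_le (hαpos y hy0) (hcons y hy).1
  · intro y hy hy0
    exact lt_of_lt_of_le (hγpos y hy0) (hcons y hy).2.2.1
  · exact hkey
  · intro ε hε
    obtain ⟨δ, hδ, hsol⟩ := hkey ε hε
    exact ⟨δ, hδ, 1, one_pos, fun x hx hx0 t ht => hsol x hx hx0 t (by linarith)⟩
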